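/- Let (X,d) be a finite metric space, 1 ≤ p < ∞, and μ a probability measure on X. Let Y_1, Y_2, … be i.i.d. X-valued random elements with common distribution μ, and let bar μ_n := (1/n)∑_{i=1}^n δ_{Y_i}. Then F_p(bar μ_n) → F_p(μ) in the Hausdorff metric almost surely (i.e., almost surely both ρ(F_p(bar μ_n), F_p(μ)) → 0 and ρ(F_p(μ), F_p(bar μ_n)) → 0) if and only if F_p(μ) = [x]_μ for some x ∈ X; and likewise F_p^*(bar μ_n) → F_p^*(μ) in the Hausdorff metric almost surely if and only if F_p^*(μ) = [x]_μ for some x ∈ X. -/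

import Mathlib

open MeasureTheory Filter Topology ProbabilityTheory

/-- `f_p(μ,x) := ∫ d(x,y)^p dμ(y)`. -/
noncomputable def fp {X : Type*} [MetricSpace X] [MeasurableSpace X]
    (p : ℝ) (μ : Measure X) (x : X) : ℝ :=
  ∫ y, dist x y ^ p ∂μ

/-- Membership in `P_p(X)`. -/
def MemPp {X : Type*} [MetricSpace X] [MeasurableSpace X] (p : ℝ) (μ : Measure X) : Prop :=
  ∀ x : X, Integrable (fun y => dist x y ^ p) μ

/-- Weak convergence of a sequence of Borel measures. -/
def WeakConv {X : Type*} [MetricSpace X] [MeasurableSpace X]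
    (μs : ℕ → Measure X) (μ : Measure X) : Prop :=
  ∀ g : BoundedContinuousFunction X ℝ,
    Tendsto (fun n => ∫ y, g y ∂(μs n)) atTop (𝓝 (∫ y, g y ∂μ))

/-- Convergence in `τ_w^p`. -/
def TauWp {X : Type*} [MetricSpace X] [MeasurableSpace X]
    (p : ℝ) (μs : ℕ → Measure X) (μ : Measure X) : Prop :=
  WeakConv μs μ ∧ ∀ x : X, Tendsto (fun n => fp p (μs n) x) atTop (𝓝 (fp p μ x))

/-- Joint Fréchet p-mean `F_p(μ,C)`. -/
def Fp {X : Type*} [MetricSpace X] [MeasurableSpace X]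
    (p : ℝ) (μ : Measure X) (C : Set X) : Set X :=
  {x ∈ C | ∀ x' ∈ C, fp p μ x ≤ fp p μ x'}

/-- Support of a measure. -/
def msupport {X : Type*} [MetricSpace X] [MeasurableSpace X] (μ : Measure X) : Set X :=
  {x : X | ∀ U : Set X, IsOpen U → x ∈ U → 0 < μ U}

/-- Kuratowski upper limit. -/
def KurLs {X : Type*} [MetricSpace X] (C : ℕ → Set X) : Set X :=
  ⋂ n, closure (⋃ m, ⋃ (_ : n ≤ m), C m)

/-- Kuratowski lower limit. -/
def KurLi {X : Type*} [MetricSpace X] (C : ℕ → Set X) : Set X :=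
  {x : X | ∀ ε : ℝ, 0 < ε → ∀ᶠ n in atTop, ∃ y ∈ C n, dist x y < ε}

/-- One-sided Hausdorff distance `ρ(C,C') = max_{x ∈ C} min_{x' ∈ C'} d(x,x')`. -/
noncomputable def rho {X : Type*} [MetricSpace X] (C C' : Set X) : ℝ :=
  ⨆ x ∈ C, Metric.infDist x C'

/-- Empirical measure of the first `n` samples. -/
noncomputable def empMeasure {X Ω : Type*} [MeasurableSpace X]
    (Y : ℕ → Ω → X) (n : ℕ) (ω : Ω) : Measure X :=
  (n : ENNReal)⁻¹ • ∑ i ∈ Finset.range n, Measure.dirac (Y i ω)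

/-- Effros σ-algebra on subsets of `X`. -/
def effros (X : Type*) [TopologicalSpace X] : MeasurableSpace (Set X) :=
  MeasurableSpace.generateFrom
    {S : Set (Set X) | ∃ U : Set X, IsOpen U ∧ S = {C : Set X | (C ∩ U).Nonempty}}

/-- The relation `x ⇝_μ x'`. -/
def LeadsTo {X : Type*} [MetricSpace X] [MeasurableSpace X] (μ : Measure X) (x x' : X) : Prop :=
  ∃ ε₀ > (0 : ℝ), ∀ ε : ℝ, 0 < ε → ε ≤ ε₀ →
    ∃ φ : X → X, Set.MapsTo φ (Metric.ball x ε) (Metric.ball x' ε) ∧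
      Measurable ((Metric.ball x ε).restrict φ) ∧
      ∀ z ∈ Metric.ball x ε, ∀ᵐ y ∂μ, dist (φ z) y = dist z y

/-- The equivalence relation `x ∼_μ x'`. -/
def SimEq {X : Type*} [MetricSpace X] [MeasurableSpace X] (μ : Measure X) (x x' : X) : Prop :=
  LeadsTo μ x x' ∧ LeadsTo μ x' x

/-- The equivalence class `[x]_μ`. -/
def eqClass {X : Type*} [MetricSpace X] [MeasurableSpace X] (μ : Measure X) (x : X) : Set X :=
  {x' : X | SimEq μ x x'}

set_option linter.unusedSectionVars false
set_option linter.unusedVariables false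
set_option maxHeartbeats 1000000

section Aux

variable {X : Type*} [MetricSpace X] [Finite X] [MeasurableSpace X] [BorelSpace X]

lemma aux_measurableSet (s : Set X) : MeasurableSet s := (isOpen_discrete s).measurableSet

instance : MeasurableSingletonClass X := ⟨fun a => aux_measurableSet {a}⟩

lemma aux_measurable {β : Type*} [MeasurableSpace β] (f : X → β) : Measurable f :=
  fun _ _ => aux_measurableSet _

lemma fp_emp {Ω : Type*} (p : ℝ) (Y : ℕ → Ω → X) (n : ℕ) (ω : Ω) (x : X) :
    fp p (empMeasure Y n ω) x = (n : ℝ)⁻¹ * ∑ i ∈ Finset.range n, dist x (Y i ω) ^ p := by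
  rw [fp, empMeasure, integral_smul_measure,
    integral_finset_sum_measure (fun i _ => Integrable.of_finite)]
  simp [integral_dirac]

lemma Fp_nonempty (p : ℝ) (ν : Measure X) {S : Set X} (hS : S.Nonempty) :
    (Fp p ν S).Nonempty := by
  obtain ⟨x, hx, hmin⟩ := Set.exists_min_image S (fp p ν) (Set.toFinite S) hS
  exact ⟨x, hx, hmin⟩

lemma exists_eps0 : ∃ ε : ℝ, 0 < ε ∧ ∀ a b : X, dist a b < ε → a = b := by
  set T : Set ℝ := (Set.range fun q : X × X => dist q.1 q.2) \ {0} with hT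
  have hTfin : T.Finite := (Set.finite_range _).diff
  rcases T.eq_empty_or_nonempty with h | h
  · refine ⟨1, one_pos, fun a b _ => ?_⟩
    have hd : dist a b ∈ Set.range fun q : X × X => dist q.1 q.2 := ⟨(a, b), rfl⟩
    by_contra hab
    have : dist a b ∈ T := ⟨hd, by simpa [dist_eq_zero] using hab⟩
    simp [h] at this
  · obtain ⟨m, hm, hmin⟩ := Set.exists_min_image T id hTfin h
    obtain ⟨⟨q, hq⟩, hm0⟩ := hm
    have hmpos : 0 < m := lt_of_le_of_ne (hq ▸ dist_nonneg) (by simpa using (Ne.symm hm0))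
    refine ⟨m, hmpos, fun a b hab => ?_⟩
    by_contra hne
    have : dist a b ∈ T := ⟨⟨(a, b), rfl⟩, by simpa [dist_eq_zero] using hne⟩
    exact absurd hab (not_lt.2 (hmin _ this))

lemma infDist_le_rho {C C' : Set X} {x : X} (hx : x ∈ C) :
    Metric.infDist x C' ≤ rho C C' := by
  have hb : BddAbove (Set.range fun x => ⨆ _ : x ∈ C, Metric.infDist x C') :=
    (Set.finite_range _).bddAbove
  calc Metric.infDist x C' = ⨆ _ : x ∈ C, Metric.infDist x C' := (ciSup_pos (f := fun _ : x ∈ C => Metric.infDist x C') hx).symm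
    _ ≤ rho C C' := le_ciSup hb x

lemma subset_of_rho_lt {C C' : Set X} (h' : C'.Nonempty) {ε : ℝ}
    (hε : ∀ a b : X, dist a b < ε → a = b) (h : rho C C' < ε) : C ⊆ C' := by
  intro x hx
  have hlt : Metric.infDist x C' < ε := (infDist_le_rho hx).trans_lt h
  obtain ⟨y, hy, hd⟩ := (Metric.infDist_lt_iff h').1 hlt
  exact (hε x y hd) ▸ hy

lemma rho_zero_of_subset {C C' : Set X} (h : C ⊆ C') : rho C C' = 0 := by
  have hz : ∀ x : X, (⨆ _ : x ∈ C, Metric.infDist x C') = 0 := by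
    intro x
    by_cases hx : x ∈ C
    · simp [ciSup_pos hx, Metric.infDist_zero_of_mem (h hx)]
    · haveI : IsEmpty (x ∈ C) := ⟨hx⟩
      exact Real.iSup_of_isEmpty _
  rw [rho, funext hz]
  exact Real.iSup_const_zero

lemma mem_msupport {ν : Measure X} {x : X} : x ∈ msupport ν ↔ ν {x} ≠ 0 := by
  constructor
  · intro h
    exact (h {x} (isOpen_discrete _) rfl).ne'
  · intro h U hU hxU
    exact lt_of_lt_of_le (pos_iff_ne_zero.2 h) (measure_mono (Set.singleton_subset_iff.2 hxU))

end Aux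

section Prob

variable {X : Type*} [MetricSpace X] [Finite X] [MeasurableSpace X] [BorelSpace X]
  {Ω : Type*} [MeasurableSpace Ω] {P : Measure Ω} [IsProbabilityMeasure P]
  {μ : Measure X} [IsProbabilityMeasure μ]
  {Y : ℕ → Ω → X}

lemma map_apply_eq (hYmeas : ∀ i, Measurable (Y i)) (hlaw : ∀ i, Measure.map (Y i) P = μ)
    (i : ℕ) (D : Set X) : P (Y i ⁻¹' D) = μ D := by
  rw [← hlaw i, Measure.map_apply (hYmeas i) (aux_measurableSet D)]

lemma ae_avoid_null (hYmeas : ∀ i, Measurable (Y i)) (hlaw : ∀ i, Measure.map (Y i) P = μ)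
    {N : Set X} (hN : μ N = 0) : ∀ᵐ ω ∂P, ∀ i, Y i ω ∉ N := by
  rw [ae_all_iff]
  intro i
  have h0 : P (Y i ⁻¹' N) = 0 := by rw [map_apply_eq hYmeas hlaw i N, hN]
  rw [ae_iff]
  simp only [not_not]; exact h0

lemma iIndepSet_preimage (hYmeas : ∀ i, Measurable (Y i))
    (hindep : iIndepFun Y P) (D : Set X) :
    iIndepSet (fun i => Y i ⁻¹' D) P := by
  classical
  rw [iIndepSet_iff]
  intro s' f H
  have key : ∀ i ∈ s', ∃ E : Set X, f i = Y i ⁻¹' E := by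
    intro i hi
    rcases measurableSet_generateFrom_singleton_iff.1 (H i hi) with h | h | h | h
    · exact ⟨∅, by simp [h]⟩
    · exact ⟨D, h⟩
    · exact ⟨Dᶜ, by simp [h, Set.preimage_compl]⟩
    · exact ⟨Set.univ, by simp [h]⟩
  choose E hE using key
  set sets : ℕ → Set X := fun i => if hi : i ∈ s' then E i hi else Set.univ with hsets
  have hf : ∀ i ∈ s', f i = Y i ⁻¹' sets i := by
    intro i hi; simp only [hsets, dif_pos hi]; exact hE i hi
  calc P (⋂ i ∈ s', f i) = P (⋂ i ∈ s', Y i ⁻¹' sets i) := by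
        congr 1; exact Set.iInter₂_congr hf
    _ = ∏ i ∈ s', P (Y i ⁻¹' sets i) :=
        hindep.measure_inter_preimage_eq_mul s' (fun i _ => aux_measurableSet _)
    _ = ∏ i ∈ s', P (f i) := Finset.prod_congr rfl (fun i hi => by rw [hf i hi])

lemma ae_frequently_mem (hYmeas : ∀ i, Measurable (Y i))
    (hindep : iIndepFun Y P)
    (hlaw : ∀ i, Measure.map (Y i) P = μ)
    {D : Set X} (hD : μ D ≠ 0) : ∀ᵐ ω ∂P, ∀ N : ℕ, ∃ i ≥ N, Y i ω ∈ D := by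
  have hsum : (∑' i : ℕ, P (Y i ⁻¹' D)) = (⊤ : ENNReal) := by
    have : ∀ i : ℕ, P (Y i ⁻¹' D) = μ D := fun i => map_apply_eq hYmeas hlaw i D
    simp only [this]
    exact ENNReal.tsum_const_eq_top_of_ne_zero hD
  have hone : P (limsup (fun i => Y i ⁻¹' D) atTop) = 1 :=
    measure_limsup_eq_one (fun i => (aux_measurableSet D).preimage (hYmeas i))
      (iIndepSet_preimage hYmeas hindep D) hsum
  have hms : MeasurableSet (limsup (fun i => Y i ⁻¹' D) atTop) :=
    MeasurableSet.measurableSet_limsup fun i => (aux_measurableSet D).preimage (hYmeas i)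
  have hmem : ∀ᵐ ω ∂P, ω ∈ limsup (fun i => Y i ⁻¹' D) atTop := by
    have hc : P (limsup (fun i => Y i ⁻¹' D) atTop)ᶜ = 0 := by
      simp [measure_compl hms (measure_ne_top _ _), hone]
    exact hc
  filter_upwards [hmem] with ω hω N
  exact (frequently_atTop.1 (mem_limsup_iff_frequently_mem.1 hω)) N

lemma ae_fp_tendsto (hYmeas : ∀ i, Measurable (Y i))
    (hindep : iIndepFun Y P)
    (hlaw : ∀ i, Measure.map (Y i) P = μ) (p : ℝ) :
    ∀ᵐ ω ∂P, ∀ x : X,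
      Tendsto (fun n => fp p (empMeasure Y (n+1) ω) x) atTop (𝓝 (fp p μ x)) := by
  rw [ae_all_iff]
  intro x
  set g : X → ℝ := fun y => dist x y ^ p with hg
  have hgmeas : Measurable g := aux_measurable g
  have hint : Integrable (fun ω => g (Y 0 ω)) P := by
    have h1 : Integrable g μ := Integrable.of_finite
    rw [← hlaw 0] at h1
    exact (integrable_map_measure hgmeas.aestronglyMeasurable (hYmeas 0).aemeasurable).1 h1
  have hindep' : Pairwise (Function.onFun (IndepFun · · P) fun i ω => g (Y i ω)) :=
    fun i j hij => (hindep.indepFun hij).comp hgmeas hgmeas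
  have hident : ∀ i, IdentDistrib (fun ω => g (Y i ω)) (fun ω => g (Y 0 ω)) P P :=
    fun i => IdentDistrib.comp
      ⟨(hYmeas i).aemeasurable, (hYmeas 0).aemeasurable, (hlaw i).trans (hlaw 0).symm⟩ hgmeas
  have hexp : (∫ ω, g (Y 0 ω) ∂P) = fp p μ x := by
    rw [fp, ← hlaw 0, integral_map (hYmeas 0).aemeasurable hgmeas.aestronglyMeasurable]
  have H := strong_law_ae (fun i ω => g (Y i ω)) hint hindep' hident
  filter_upwards [H] with ω hω
  have h2 := hω.comp (tendsto_add_atTop_nat 1)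
  rw [hexp] at h2
  apply h2.congr
  intro n
  simp only [Function.comp]
  rw [fp_emp]
  simp [smul_eq_mul, hg]

lemma main_iff (p : ℝ) (hp : 1 ≤ p)
    (hYmeas : ∀ i, Measurable (Y i))
    (hindep : iIndepFun Y P)
    (hlaw : ∀ i, Measure.map (Y i) P = μ)
    (Sn : ℕ → Ω → Set X) (S : Set X) (hS : S.Nonempty)
    (hSn : ∀ n ω, (Sn n ω).Nonempty)
    (hSS : ∀ᵐ ω ∂P, ∀ᶠ n in atTop, Sn n ω = S)
    (hclosed : ∀ x ∈ Fp p μ S, ∀ x' : X, (∀ᵐ y ∂μ, dist x y = dist x' y) → x' ∈ S) :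
    (∀ᵐ ω ∂P,
        Tendsto (fun n => rho (Fp p (empMeasure Y (n+1) ω) (Sn n ω)) (Fp p μ S)) atTop (𝓝 0) ∧
        Tendsto (fun n => rho (Fp p μ S) (Fp p (empMeasure Y (n+1) ω) (Sn n ω))) atTop (𝓝 0)) ↔
    ∃ x : X, Fp p μ S = {x' : X | ∀ᵐ y ∂μ, dist x y = dist x' y} := by
  have hp0 : p ≠ 0 := by linarith
  obtain ⟨ε0, hε0, hε0'⟩ := exists_eps0 (X := X)
  have hFne : (Fp p μ S).Nonempty := Fp_nonempty p μ hS
  constructor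
  · intro H
    obtain ⟨x, hxF⟩ := Fp_nonempty p μ hS
    refine ⟨x, Set.Subset.antisymm ?_ ?_⟩
    · intro x' hx'F
      show ∀ᵐ y ∂μ, dist x y = dist x' y
      by_contra hc
      rw [ae_iff] at hc
      have hfreq := ae_frequently_mem hYmeas hindep hlaw
        (D := {y | ¬ dist x y = dist x' y}) hc
      have hne : (ae P).NeBot := ae_neBot.2 (IsProbabilityMeasure.ne_zero P)
      obtain ⟨ω, ⟨hT1, hT2⟩, hsn, hfr⟩ := (H.and (hSS.and hfreq)).exists
      have hev : ∀ᶠ n in atTop, Fp p (empMeasure Y (n+1) ω) (Sn n ω) = Fp p μ S := by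
        filter_upwards [hT1.eventually_lt_const hε0, hT2.eventually_lt_const hε0]
          with n h1 h2
        exact Set.Subset.antisymm (subset_of_rho_lt hFne hε0' h1)
          (subset_of_rho_lt (Fp_nonempty _ _ (hSn n ω)) hε0' h2)
      obtain ⟨N, hN⟩ := eventually_atTop.1 hev
      have hsum : ∀ n ≥ N, (∑ i ∈ Finset.range (n+1), dist x (Y i ω) ^ p)
          = ∑ i ∈ Finset.range (n+1), dist x' (Y i ω) ^ p := by
        intro n hn
        have hEq := hN n hn
        have hx1 : x ∈ Fp p (empMeasure Y (n+1) ω) (Sn n ω) := hEq ▸ hxF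
        have hx2 : x' ∈ Fp p (empMeasure Y (n+1) ω) (Sn n ω) := hEq ▸ hx'F
        have h1 : fp p (empMeasure Y (n+1) ω) x = fp p (empMeasure Y (n+1) ω) x' :=
          le_antisymm (hx1.2 x' hx2.1) (hx2.2 x hx1.1)
        rw [fp_emp, fp_emp] at h1
        have hne' : (((n:ℕ)+1 : ℕ) : ℝ)⁻¹ ≠ 0 :=
          inv_ne_zero (Nat.cast_ne_zero.2 (Nat.succ_ne_zero n))
        exact mul_left_cancel₀ hne' h1
      obtain ⟨i, hiN, hiD⟩ := hfr (N+1)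
      have h1 := hsum i (le_trans (Nat.le_succ N) hiN)
      have h2 := hsum (i-1) (Nat.le_pred_of_lt hiN)
      have hi1 : i - 1 + 1 = i := Nat.succ_pred_eq_of_pos (Nat.lt_of_le_of_lt (Nat.zero_le N) hiN)
      rw [hi1] at h2
      rw [Finset.sum_range_succ, Finset.sum_range_succ, h2] at h1
      have hterm : dist x (Y i ω) ^ p = dist x' (Y i ω) ^ p := by linarith
      exact hiD (Real.rpow_left_injOn hp0 dist_nonneg dist_nonneg hterm)
    · intro x' hx'
      have hfp : fp p μ x' = fp p μ x := by
        rw [fp, fp]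
        apply integral_congr_ae
        filter_upwards [hx'] with y hy
        rw [hy]
      exact ⟨hclosed x hxF x' hx', fun x'' hx'' => hfp ▸ (hxF.2 x'' hx'')⟩
  · rintro ⟨x, hFE⟩
    have hslln := ae_fp_tendsto hYmeas hindep hlaw p
    have hNnull : μ (⋃ a ∈ Fp p μ S, {y | ¬ dist x y = dist a y}) = 0 := by
      rw [measure_biUnion_null_iff (Set.toFinite _).countable]
      intro a haF
      have haE : ∀ᵐ y ∂μ, dist x y = dist a y := by rw [hFE] at haF; exact haF
      exact ae_iff.1 haE
    have havoid := ae_avoid_null hYmeas hlaw hNnull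
    filter_upwards [hslln, hSS, havoid] with ω hconv hsn havd
    have hconst : ∀ n : ℕ, ∀ a ∈ Fp p μ S, ∀ b ∈ Fp p μ S,
        fp p (empMeasure Y (n+1) ω) a = fp p (empMeasure Y (n+1) ω) b := by
      intro n a ha b hb
      rw [fp_emp, fp_emp]
      congr 1
      refine Finset.sum_congr rfl (fun i _ => ?_)
      have hia : dist x (Y i ω) = dist a (Y i ω) := by
        by_contra hne
        exact havd i (Set.mem_biUnion ha hne)
      have hib : dist x (Y i ω) = dist b (Y i ω) := by
        by_contra hne
        exact havd i (Set.mem_biUnion hb hne)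
      rw [← hia, ← hib]
    have hev2 : ∀ᶠ n in atTop, Fp p (empMeasure Y (n+1) ω) S = Fp p μ S := by
      by_cases hcase : ∃ z ∈ S, z ∉ Fp p μ S
      · obtain ⟨z, hzS, hzF⟩ := hcase
        obtain ⟨xF, hxF⟩ := hFne
        obtain ⟨z₀, hz₀, hz₀min⟩ := Set.exists_min_image (S \ Fp p μ S) (fp p μ)
          (Set.toFinite _) ⟨z, hzS, hzF⟩
        set δ := fp p μ z₀ - fp p μ xF with hδdef
        have hδ : 0 < δ := by
          have hle : fp p μ xF ≤ fp p μ z₀ := hxF.2 z₀ hz₀.1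
          rcases lt_or_eq_of_le hle with h | h
          · exact sub_pos.2 h
          · exact absurd ⟨hz₀.1, fun x' hx' => h ▸ hxF.2 x' hx'⟩ hz₀.2
        have hunif : ∀ᶠ n in atTop, ∀ a : X,
            |fp p (empMeasure Y (n+1) ω) a - fp p μ a| < δ/2 := by
          rw [eventually_all]
          intro a
          obtain ⟨Na, hNa⟩ := Metric.tendsto_atTop.1 (hconv a) (δ/2) (half_pos hδ)
          rw [eventually_atTop]
          exact ⟨Na, fun n hn => by rw [← Real.dist_eq]; exact hNa n hn⟩
        filter_upwards [hunif] with n hn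
        have hxFδ : fp p μ xF = fp p μ z₀ - δ := by rw [hδdef]; ring
        ext w
        constructor
        · rintro ⟨hwS, hwmin⟩
          by_contra hwF
          have h1 : fp p (empMeasure Y (n+1) ω) xF < fp p μ xF + δ/2 := by
            have := hn xF; rw [abs_lt] at this; linarith [this.1, this.2]
          have h2 : fp p μ w - δ/2 < fp p (empMeasure Y (n+1) ω) w := by
            have := hn w; rw [abs_lt] at this; linarith [this.1]
          have h3 : fp p μ z₀ ≤ fp p μ w := hz₀min w ⟨hwS, hwF⟩
          have h4 : fp p (empMeasure Y (n+1) ω) w ≤ fp p (empMeasure Y (n+1) ω) xF :=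
            hwmin xF hxF.1
          linarith
        · intro hwF
          refine ⟨hwF.1, fun x' hx' => ?_⟩
          by_cases hx'F : x' ∈ Fp p μ S
          · exact le_of_eq (hconst n w hwF x' hx'F)
          · have h1 : fp p (empMeasure Y (n+1) ω) w < fp p μ w + δ/2 := by
              have := hn w; rw [abs_lt] at this; linarith [this.1, this.2]
            have h2 : fp p μ x' - δ/2 < fp p (empMeasure Y (n+1) ω) x' := by
              have := hn x'; rw [abs_lt] at this; linarith [this.1]
            have h3 : fp p μ z₀ ≤ fp p μ x' := hz₀min x' ⟨hx', hx'F⟩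
            have hw_xF : fp p μ w = fp p μ xF :=
              le_antisymm (hwF.2 xF hxF.1) (hxF.2 w hwF.1)
            linarith
      · push_neg at hcase
        have hSF : Fp p μ S = S :=
          Set.Subset.antisymm (fun w hw => hw.1) (fun z hz => hcase z hz)
        refine Filter.Eventually.of_forall (fun n => ?_)
        ext w
        constructor
        · rintro ⟨hwS, _⟩
          exact hcase w hwS
        · intro hwF
          refine ⟨hwF.1, fun x' hx' => le_of_eq ?_⟩
          exact hconst n w hwF x' (hcase x' hx')
    have hev : ∀ᶠ n in atTop, Fp p (empMeasure Y (n+1) ω) (Sn n ω) = Fp p μ S := by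
      filter_upwards [hsn, hev2] with n h1 h2
      rw [h1, h2]
    constructor
    · refine (tendsto_const_nhds (x := (0:ℝ))).congr' ?_
      filter_upwards [hev] with n h
      rw [h, rho_zero_of_subset subset_rfl]
    · refine (tendsto_const_nhds (x := (0:ℝ))).congr' ?_
      filter_upwards [hev] with n h
      rw [h, rho_zero_of_subset subset_rfl]

end Prob

section Prob2

variable {X : Type*} [MetricSpace X] [Finite X] [MeasurableSpace X] [BorelSpace X]
  {Ω : Type*} [MeasurableSpace Ω] {P : Measure Ω} [IsProbabilityMeasure P]
  {μ : Measure X} [IsProbabilityMeasure μ]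
  {Y : ℕ → Ω → X}

lemma emp_singleton_ne_zero {n i : ℕ} {ω : Ω} (hi : i < n) (z : X) (hz : Y i ω = z) :
    empMeasure Y n ω {z} ≠ 0 := by
  rw [empMeasure]
  intro h
  rw [Measure.smul_apply, smul_eq_mul] at h
  rcases mul_eq_zero.1 h with h | h
  · exact (ENNReal.inv_ne_zero.2 (ENNReal.natCast_ne_top n)) h
  · rw [Measure.finset_sum_apply] at h
    rw [Finset.sum_eq_zero_iff] at h
    have h0 := h i (Finset.mem_range.2 hi)
    rw [hz] at h0
    rw [Measure.dirac_apply_of_mem (Set.mem_singleton z)] at h0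
    exact one_ne_zero h0

lemma emp_singleton_eq_zero {n : ℕ} {ω : Ω} {z : X} (h : ∀ i < n, Y i ω ≠ z) :
    empMeasure Y n ω {z} = 0 := by
  rw [empMeasure, Measure.smul_apply, smul_eq_mul, Measure.finset_sum_apply]
  have hz : ∀ i ∈ Finset.range n, Measure.dirac (Y i ω) ({z} : Set X) = 0 := by
    intro i hi
    rw [Measure.dirac_apply' _ (aux_measurableSet _)]
    simp [h i (Finset.mem_range.1 hi)]
  rw [Finset.sum_eq_zero hz, mul_zero]

end Prob2

theorem frechet_stmt19 {X : Type*} [MetricSpace X] [Finite X]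
    [MeasurableSpace X] [BorelSpace X]
    (p : ℝ) (hp : 1 ≤ p)
    (μ : Measure X) (hμprob : IsProbabilityMeasure μ)
    {Ω : Type*} [MeasurableSpace Ω] (P : Measure Ω) (hPprob : IsProbabilityMeasure P)
    (Y : ℕ → Ω → X) (hYmeas : ∀ i, Measurable (Y i))
    (hindep : iIndepFun Y P)
    (hlaw : ∀ i, Measure.map (Y i) P = μ) :
    ((∀ᵐ ω ∂P,
        Tendsto (fun n => rho (Fp p (empMeasure Y (n + 1) ω) Set.univ) (Fp p μ Set.univ))
          atTop (𝓝 0) ∧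
        Tendsto (fun n => rho (Fp p μ Set.univ) (Fp p (empMeasure Y (n + 1) ω) Set.univ))
          atTop (𝓝 0)) ↔
      (∃ x : X, Fp p μ Set.univ = {x' : X | ∀ᵐ y ∂μ, dist x y = dist x' y})) ∧
    ((∀ᵐ ω ∂P,
        Tendsto (fun n =>
            rho (Fp p (empMeasure Y (n + 1) ω) (msupport (empMeasure Y (n + 1) ω)))
              (Fp p μ (msupport μ)))
          atTop (𝓝 0) ∧
        Tendsto (fun n =>
            rho (Fp p μ (msupport μ))
              (Fp p (empMeasure Y (n + 1) ω) (msupport (empMeasure Y (n + 1) ω))))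
          atTop (𝓝 0)) ↔
      (∃ x : X, Fp p μ (msupport μ) = {x' : X | ∀ᵐ y ∂μ, dist x y = dist x' y})) := by
  haveI := hμprob
  haveI := hPprob
  have hXne : Nonempty X := by
    by_contra h
    rw [not_nonempty_iff] at h
    have h1 : μ Set.univ = 1 := measure_univ
    rw [Set.univ_eq_empty_iff.2 h, measure_empty] at h1
    exact (zero_ne_one (α := ENNReal)) h1
  constructor
  · exact main_iff p hp hYmeas hindep hlaw (fun _ _ => Set.univ) Set.univ
      Set.univ_nonempty (fun _ _ => Set.univ_nonempty)
      (Filter.Eventually.of_forall fun _ => Filter.Eventually.of_forall fun _ => rfl)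
      (fun _ _ _ _ => Set.mem_univ _)
  · have hSne : (msupport μ).Nonempty := by
      by_contra h
      rw [Set.not_nonempty_iff_eq_empty] at h
      have hall : ∀ y : X, μ {y} = 0 := by
        intro y
        by_contra hy
        have : y ∈ msupport μ := mem_msupport.2 hy
        rw [h] at this
        exact this
      have h0 : μ Set.univ = 0 := by
        rw [← Set.iUnion_of_singleton X]
        exact measure_iUnion_null hall
      rw [measure_univ] at h0
      exact one_ne_zero h0
    have hSn : ∀ (n : ℕ) (ω : Ω), (msupport (empMeasure Y (n+1) ω)).Nonempty :=
      fun n ω => ⟨Y 0 ω, mem_msupport.2 (emp_singleton_ne_zero (Nat.succ_pos n) (Y 0 ω) rfl)⟩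
    have hsupp_null : μ ((msupport μ)ᶜ) = 0 := by
      refine measure_mono_null (fun y hy => Set.mem_biUnion (t := fun y => ({y} : Set X)) hy rfl) ?_
      rw [measure_biUnion_null_iff (Set.toFinite ((msupport μ)ᶜ)).countable]
      intro y hy
      by_contra hy2
      exact hy (mem_msupport.2 hy2)
    have havoid := ae_avoid_null hYmeas hlaw hsupp_null
    have hcover : ∀ᵐ ω ∂P, ∀ y : X, μ {y} ≠ 0 → ∀ᶠ n in atTop, ∃ i ≤ n, Y i ω = y := by
      rw [ae_all_iff]
      intro y
      by_cases hy : μ {y} = 0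
      · exact Filter.Eventually.of_forall fun ω hc => absurd hy hc
      · have hfr := ae_frequently_mem hYmeas hindep hlaw (D := {y}) hy
        filter_upwards [hfr] with ω hω
        intro _
        obtain ⟨i, _, hiy⟩ := hω 0
        rw [Set.mem_singleton_iff] at hiy
        rw [eventually_atTop]
        exact ⟨i, fun n hn => ⟨i, hn, hiy⟩⟩
    have hSS : ∀ᵐ ω ∂P,
        ∀ᶠ n in atTop, msupport (empMeasure Y (n+1) ω) = msupport μ := by
      filter_upwards [havoid, hcover] with ω havd hcov
      have hall : ∀ᶠ n in atTop, ∀ y : X, μ {y} ≠ 0 → ∃ i ≤ n, Y i ω = y := by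
        rw [eventually_all]
        intro y
        by_cases hy : μ {y} = 0
        · exact Filter.Eventually.of_forall fun n hc => absurd hy hc
        · exact (hcov y hy).mono fun n h _ => h
      filter_upwards [hall] with n hn
      ext z
      rw [mem_msupport, mem_msupport]
      constructor
      · intro hz
        have hex : ∃ i < n+1, Y i ω = z := by
          by_contra hno
          push_neg at hno
          exact hz (emp_singleton_eq_zero hno)
        obtain ⟨i, _, hiz⟩ := hex
        have h2 := havd i
        rw [Set.notMem_compl_iff, hiz] at h2
        exact mem_msupport.1 h2
      · intro hz
        obtain ⟨i, hin, hiz⟩ := hn z hz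
        exact emp_singleton_ne_zero (Nat.lt_succ_of_le hin) z hiz
    have hclosed : ∀ x ∈ Fp p μ (msupport μ), ∀ x' : X,
        (∀ᵐ y ∂μ, dist x y = dist x' y) → x' ∈ msupport μ := by
      intro x hx x' hae
      have hxpos : μ {x} ≠ 0 := mem_msupport.1 hx.1
      have hxx : dist x x = dist x' x := by
        by_contra hne
        have hsub : ({x} : Set X) ⊆ {y | ¬ dist x y = dist x' y} := by
          intro y hy
          rw [Set.mem_singleton_iff] at hy
          subst hy
          exact hne
        exact hxpos (measure_mono_null hsub (ae_iff.1 hae))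
      have hx'x : x' = x := by
        rw [dist_self] at hxx
        exact dist_eq_zero.1 hxx.symm
      rw [hx'x]
      exact hx.1
    exact main_iff p hp hYmeas hindep hlaw
      (fun n ω => msupport (empMeasure Y (n+1) ω)) (msupport μ) hSne hSn hSS hclosed
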